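/- Violation of Rule 3a (almost simultaneous Hall set): Let P ⊆ A be an almost simultaneous Hall set, i.e., |N(P)| + |N(P^S) ∩ N(P^T)| = |P| + 1. Then no edge (u,v) with u ∈ (S ∩ T) \ P and v ∈ N(P^S) ∩ N(P^T) can belong to a simultaneous matching of G. -/
import Mathlib


open Finset

variable {V W : Type*} [DecidableEq V] [DecidableEq W]

/-- Neighborhood of a set `P` of left vertices in the bipartite graph with edge set `E`. -/
def nbhd (E : Finset (V × W)) (P : Finset V) : Finset W :=
  (E.filter (fun e => e.1 ∈ P)).image Prod.snd

/-- A set of pairwise non-adjacent edges. -/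
def IsMatching (M : Finset (V × W)) : Prop :=
  ∀ e ∈ M, ∀ f ∈ M, e ≠ f → e.1 ≠ f.1 ∧ e.2 ≠ f.2

/-- Every vertex of `S` is incident to an edge of `M`. -/
def Covers (M : Finset (V × W)) (S : Finset V) : Prop :=
  ∀ s ∈ S, ∃ e ∈ M, e.1 = s

/-- `M` is a simultaneous matching: `M ∩ (S × B)` is a matching covering `S` and
`M ∩ (T × B)` is a matching covering `T`. -/
def SimMatching (E M : Finset (V × W)) (S T : Finset V) : Prop :=
  M ⊆ E ∧
  IsMatching (M.filter (fun e => e.1 ∈ S)) ∧ Covers (M.filter (fun e => e.1 ∈ S)) S ∧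
  IsMatching (M.filter (fun e => e.1 ∈ T)) ∧ Covers (M.filter (fun e => e.1 ∈ T)) T

lemma mem_nbhd {E : Finset (V × W)} {P : Finset V} {b : W} :
    b ∈ nbhd E P ↔ ∃ e ∈ E, e.1 ∈ P ∧ e.2 = b := by
  simp only [nbhd, Finset.mem_image, Finset.mem_filter]
  constructor
  · rintro ⟨e, ⟨he, hp⟩, hb⟩; exact ⟨e, he, hp, hb⟩
  · rintro ⟨e, he, hp, hb⟩; exact ⟨e, ⟨he, hp⟩, hb⟩

/-- Rule 3a: if `P` is an almost simultaneous Hall set, no edge `(u,v)` with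
`u ∈ (S ∩ T) \ P` and `v ∈ N(P^S) ∩ N(P^T)` can belong to a simultaneous matching. -/
theorem rule3a_sound (B : Finset W) (S T : Finset V) (E : Finset (V × W))
    (hE : E ⊆ (S ∪ T) ×ˢ B) (hST : (S ∩ T).Nonempty)
    (P : Finset V) (hP : P ⊆ S ∪ T)
    (hAlmost : (nbhd E P).card +
      (nbhd E (P ∩ (S \ T)) ∩ nbhd E (P ∩ (T \ S))).card = P.card + 1)
    (u : V) (v : W) (huv : (u, v) ∈ E)
    (hu : u ∈ (S ∩ T) \ P)
    (hv : v ∈ nbhd E (P ∩ (S \ T)) ∩ nbhd E (P ∩ (T \ S))) :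
    ∀ M, SimMatching E M S T → (u, v) ∉ M := by
  intro M hM hmem
  obtain ⟨hME, hMatS, hCovS, hMatT, hCovT⟩ := hM
  simp only [mem_sdiff, mem_inter] at hu
  obtain ⟨⟨huS, huT⟩, huP⟩ := hu
  have huvS : (u, v) ∈ M.filter (fun e => e.1 ∈ S) := mem_filter.mpr ⟨hmem, huS⟩
  have huvT : (u, v) ∈ M.filter (fun e => e.1 ∈ T) := mem_filter.mpr ⟨hmem, huT⟩
  -- injectivity consequences
  have sndS : ∀ e ∈ M.filter (fun e => e.1 ∈ S), ∀ f ∈ M.filter (fun e => e.1 ∈ S),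
      e.2 = f.2 → e = f := by
    intro e he f hf h
    by_contra hne
    exact (hMatS e he f hf hne).2 h
  have sndT : ∀ e ∈ M.filter (fun e => e.1 ∈ T), ∀ f ∈ M.filter (fun e => e.1 ∈ T),
      e.2 = f.2 → e = f := by
    intro e he f hf h
    by_contra hne
    exact (hMatT e he f hf hne).2 h
  have fstS : ∀ e ∈ M.filter (fun e => e.1 ∈ S), ∀ f ∈ M.filter (fun e => e.1 ∈ S),
      e.1 = f.1 → e = f := by
    intro e he f hf h
    by_contra hne
    exact (hMatS e he f hf hne).1 h
  have fstT : ∀ e ∈ M.filter (fun e => e.1 ∈ T), ∀ f ∈ M.filter (fun e => e.1 ∈ T),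
      e.1 = f.1 → e = f := by
    intro e he f hf h
    by_contra hne
    exact (hMatT e he f hf hne).1 h
  set D := nbhd E (P ∩ (S \ T)) ∩ nbhd E (P ∩ (T \ S)) with hD
  set ES := M.filter (fun e => e.1 ∈ S ∧ e.1 ∈ P) with hESdef
  set ET := M.filter (fun e => e.1 ∈ T ∧ e.1 ∈ P) with hETdef
  have hESsub : ES ⊆ M.filter (fun e => e.1 ∈ S) := by
    intro e he; rw [mem_filter] at he ⊢; exact ⟨he.1, he.2.1⟩
  have hETsub : ET ⊆ M.filter (fun e => e.1 ∈ T) := by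
    intro e he; rw [mem_filter] at he ⊢; exact ⟨he.1, he.2.1⟩
  set XS := ES.image Prod.snd with hXSdef
  set XT := ET.image Prod.snd with hXTdef
  -- cardinalities of XS, XT
  have cardXS : XS.card = (P ∩ S).card := by
    have h1 : XS.card = ES.card :=
      Finset.card_image_of_injOn (fun e he f hf h => sndS e (hESsub he) f (hESsub hf) h)
    have h2 : (ES.image Prod.fst).card = ES.card :=
      Finset.card_image_of_injOn (fun e he f hf h => fstS e (hESsub he) f (hESsub hf) h)
    have h3 : ES.image Prod.fst = P ∩ S := by
      ext a
      simp only [Finset.mem_image, hESdef, mem_filter, mem_inter]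
      constructor
      · rintro ⟨e, ⟨_, heS, heP⟩, rfl⟩; exact ⟨heP, heS⟩
      · rintro ⟨haP, haS⟩
        obtain ⟨e, he, hfst⟩ := hCovS a haS
        rw [mem_filter] at he
        exact ⟨e, ⟨he.1, he.2, hfst ▸ haP⟩, hfst⟩
    rw [h1, ← h3, h2]
  have cardXT : XT.card = (P ∩ T).card := by
    have h1 : XT.card = ET.card :=
      Finset.card_image_of_injOn (fun e he f hf h => sndT e (hETsub he) f (hETsub hf) h)
    have h2 : (ET.image Prod.fst).card = ET.card :=
      Finset.card_image_of_injOn (fun e he f hf h => fstT e (hETsub he) f (hETsub hf) h)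
    have h3 : ET.image Prod.fst = P ∩ T := by
      ext a
      simp only [Finset.mem_image, hETdef, mem_filter, mem_inter]
      constructor
      · rintro ⟨e, ⟨_, heT, heP⟩, rfl⟩; exact ⟨heP, heT⟩
      · rintro ⟨haP, haT⟩
        obtain ⟨e, he, hfst⟩ := hCovT a haT
        rw [mem_filter] at he
        exact ⟨e, ⟨he.1, he.2, hfst ▸ haP⟩, hfst⟩
    rw [h1, ← h3, h2]
  -- the "both" part K
  set K := (ES.filter (fun e => e.1 ∈ T)).image Prod.snd with hKdef
  have hKsub : ES.filter (fun e => e.1 ∈ T) ⊆ M.filter (fun e => e.1 ∈ S) := by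
    intro e he; exact hESsub (Finset.filter_subset _ _ he)
  have cardK : K.card = ((P ∩ S) ∩ T).card := by
    have h1 : K.card = (ES.filter (fun e => e.1 ∈ T)).card :=
      Finset.card_image_of_injOn (fun e he f hf h => sndS e (hKsub he) f (hKsub hf) h)
    have h2 : ((ES.filter (fun e => e.1 ∈ T)).image Prod.fst).card
        = (ES.filter (fun e => e.1 ∈ T)).card :=
      Finset.card_image_of_injOn (fun e he f hf h => fstS e (hKsub he) f (hKsub hf) h)
    have h3 : (ES.filter (fun e => e.1 ∈ T)).image Prod.fst = (P ∩ S) ∩ T := by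
      ext a
      simp only [Finset.mem_image, hESdef, mem_filter, mem_inter]
      constructor
      · rintro ⟨e, ⟨⟨_, heS, heP⟩, heT⟩, rfl⟩; exact ⟨⟨heP, heS⟩, heT⟩
      · rintro ⟨⟨haP, haS⟩, haT⟩
        obtain ⟨e, he, hfst⟩ := hCovS a haS
        rw [mem_filter] at he
        exact ⟨e, ⟨⟨he.1, he.2, hfst ▸ haP⟩, hfst ▸ haT⟩, hfst⟩
    rw [h1, ← h3, h2]
  -- v is in nbhd E P and in D
  have hvD : v ∈ D := hv
  have hvN : v ∈ nbhd E P := by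
    rw [hD, mem_inter] at hvD
    obtain ⟨e, he, hp, hb⟩ := mem_nbhd.mp hvD.1
    exact mem_nbhd.mpr ⟨e, he, (mem_inter.mp hp).1, hb⟩
  -- XS ∪ XT ⊆ (nbhd E P).erase v
  have hUnionSub : XS ∪ XT ⊆ (nbhd E P).erase v := by
    intro b hb
    rw [mem_union] at hb
    rw [mem_erase]
    rcases hb with hb | hb
    · obtain ⟨e, he, rfl⟩ := Finset.mem_image.mp hb
      rw [hESdef, mem_filter] at he
      refine ⟨?_, mem_nbhd.mpr ⟨e, hME he.1, he.2.2, rfl⟩⟩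
      intro hbv
      have heMS : e ∈ M.filter (fun e => e.1 ∈ S) := mem_filter.mpr ⟨he.1, he.2.1⟩
      have := sndS e heMS (u, v) huvS hbv
      rw [this] at he
      exact huP he.2.2
    · obtain ⟨e, he, rfl⟩ := Finset.mem_image.mp hb
      rw [hETdef, mem_filter] at he
      refine ⟨?_, mem_nbhd.mpr ⟨e, hME he.1, he.2.2, rfl⟩⟩
      intro hbv
      have heMT : e ∈ M.filter (fun e => e.1 ∈ T) := mem_filter.mpr ⟨he.1, he.2.1⟩
      have := sndT e heMT (u, v) huvT hbv
      rw [this] at he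
      exact huP he.2.2
  -- XS ∩ XT ⊆ K ∪ D.erase v
  have hInterSub : XS ∩ XT ⊆ K ∪ D.erase v := by
    intro b hb
    rw [mem_inter] at hb
    obtain ⟨e, he, hbe⟩ := Finset.mem_image.mp hb.1
    obtain ⟨f, hf, hbf⟩ := Finset.mem_image.mp hb.2
    rw [hESdef, mem_filter] at he
    rw [hETdef, mem_filter] at hf
    rw [mem_union]
    by_cases heT : e.1 ∈ T
    · left
      exact Finset.mem_image.mpr ⟨e, mem_filter.mpr ⟨mem_filter.mpr ⟨he.1, he.2⟩, heT⟩, hbe⟩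
    · right
      -- e.1 ∈ P ∩ (S \ T); show f.1 ∉ S
      have hfS : f.1 ∉ S := by
        intro hfS
        have heMS : e ∈ M.filter (fun e => e.1 ∈ S) := mem_filter.mpr ⟨he.1, he.2.1⟩
        have hfMS : f ∈ M.filter (fun e => e.1 ∈ S) := mem_filter.mpr ⟨hf.1, hfS⟩
        have := sndS e heMS f hfMS (by rw [hbe, hbf])
        rw [this] at heT
        exact heT hf.2.1
      have hbne : b ≠ v := by
        intro hbv
        have heMS : e ∈ M.filter (fun e => e.1 ∈ S) := mem_filter.mpr ⟨he.1, he.2.1⟩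
        have := sndS e heMS (u, v) huvS (hbe.trans hbv)
        rw [this] at he
        exact huP he.2.2
      rw [mem_erase, hD, mem_inter]
      refine ⟨hbne, ?_, ?_⟩
      · exact mem_nbhd.mpr ⟨e, hME he.1, mem_inter.mpr ⟨he.2.2, mem_sdiff.mpr ⟨he.2.1, heT⟩⟩, hbe⟩
      · exact mem_nbhd.mpr ⟨f, hME hf.1, mem_inter.mpr ⟨hf.2.2, mem_sdiff.mpr ⟨hf.2.1, hfS⟩⟩, hbf⟩
  -- final counting
  have hPdecomp : (P ∩ S).card + (P ∩ T).card = P.card + ((P ∩ S) ∩ T).card := by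
    have h1 : (P ∩ S) ∪ (P ∩ T) = P := by
      rw [← Finset.inter_union_distrib_left]
      exact Finset.inter_eq_left.mpr hP
    have h2 : (P ∩ S) ∩ (P ∩ T) = (P ∩ S) ∩ T := by
      ext a; simp only [mem_inter]; tauto
    have := Finset.card_union_add_card_inter (P ∩ S) (P ∩ T)
    rw [h1, h2] at this
    exact this.symm
  have hcu : (XS ∪ XT).card + (XS ∩ XT).card = XS.card + XT.card :=
    Finset.card_union_add_card_inter XS XT
  have h1 : (XS ∪ XT).card ≤ ((nbhd E P).erase v).card := Finset.card_le_card hUnionSub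
  have h2 : (XS ∩ XT).card ≤ K.card + (D.erase v).card :=
    le_trans (Finset.card_le_card hInterSub) (Finset.card_union_le _ _)
  have h3 : ((nbhd E P).erase v).card + 1 = (nbhd E P).card :=
    Finset.card_erase_add_one hvN
  have h4 : (D.erase v).card + 1 = D.card := Finset.card_erase_add_one hvD
  rw [cardXS, cardXT, hPdecomp] at hcu
  omega
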